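/- The subgroup E of G(Γ'') generated by {(s,0) : s ∈ V_inf} is finite; indeed E is isomorphic to (ℤ/2ℤ)^{V_inf}. Consequently β(G(Γ)) has finite index 2^{#V_inf} in G(Γ''). -/

import Mathlib

open Pointwise

/-- Relations of the graph product of cyclic groups: `s ^ n = 1` whenever the label of
`s` is the finite value `n`, and commutators of generators joined by an edge. -/
def graphProductRels {V : Type*} (Γ : SimpleGraph V) (c : V → ℕ∞) : Set (FreeGroup V) :=
  {r | (∃ (s : V) (n : ℕ), c s = (n : ℕ∞) ∧ r = FreeGroup.of s ^ n) ∨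
       (∃ s t : V, Γ.Adj s t ∧
         r = FreeGroup.of s * FreeGroup.of t * (FreeGroup.of s)⁻¹ * (FreeGroup.of t)⁻¹)}

/-- The graph product of cyclic groups associated to a graph `Γ` with labeling `c`. -/
abbrev GraphProduct {V : Type*} (Γ : SimpleGraph V) (c : V → ℕ∞) : Type _ :=
  PresentedGroup (graphProductRels Γ c)

/-- The generator of `GraphProduct Γ c` corresponding to a vertex `s`. -/
def gpGen {V : Type*} (Γ : SimpleGraph V) (c : V → ℕ∞) (s : V) : GraphProduct Γ c :=
  PresentedGroup.of s

/-- The element of the graph product represented by a word `(s₁^{e₁}, …, s_k^{e_k})`. -/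
def wordProd {V : Type*} (Γ : SimpleGraph V) (c : V → ℕ∞) (w : List (V × ℤ)) :
    GraphProduct Γ c :=
  (w.map (fun p => gpGen Γ c p.1 ^ p.2)).prod

/-- The elementary moves on words: deleting a letter that is trivial in the vertex group,
merging consecutive powers of the same generator, and swapping consecutive letters whose
generators are joined by an edge. -/
inductive GPMove {V : Type*} (Γ : SimpleGraph V) (c : V → ℕ∞) :
    List (V × ℤ) → List (V × ℤ) → Prop
  | del (w₁ w₂ : List (V × ℤ)) (s : V) (e : ℤ) (h : gpGen Γ c s ^ e = 1) :
      GPMove Γ c (w₁ ++ (s, e) :: w₂) (w₁ ++ w₂)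
  | merge (w₁ w₂ : List (V × ℤ)) (s : V) (a b : ℤ) :
      GPMove Γ c (w₁ ++ (s, a) :: (s, b) :: w₂) (w₁ ++ (s, a + b) :: w₂)
  | swap (w₁ w₂ : List (V × ℤ)) (s t : V) (a b : ℤ) (h : Γ.Adj s t) :
      GPMove Γ c (w₁ ++ (s, a) :: (t, b) :: w₂) (w₁ ++ (t, b) :: (s, a) :: w₂)

/-- A word is reduced if it cannot be shortened by any sequence of elementary moves. -/
def GPReduced {V : Type*} (Γ : SimpleGraph V) (c : V → ℕ∞) (w : List (V × ℤ)) : Prop :=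
  ∀ w', Relation.ReflTransGen (GPMove Γ c) w w' → w.length ≤ w'.length

/-- The length of a word: infinite-order letters count with the absolute value of their
exponent, finite-order letters count once. -/
def wordLen {V : Type*} (c : V → ℕ∞) (w : List (V × ℤ)) : ℕ :=
  (w.map (fun p => if c p.1 = ⊤ then p.2.natAbs else 1)).sum

/-- The length of a group element: the minimum of the lengths of words representing it. -/
noncomputable def elLen {V : Type*} (Γ : SimpleGraph V) (c : V → ℕ∞)
    (g : GraphProduct Γ c) : ℕ :=
  sInf {n | ∃ w, wordProd Γ c w = g ∧ wordLen c w = n}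

/-- `g` ends with the generator `s`. -/
def EndsWith {V : Type*} (Γ : SimpleGraph V) (c : V → ℕ∞) (g : GraphProduct Γ c)
    (s : V) : Prop :=
  ∃ (w : List (V × ℤ)) (e : ℤ), GPReduced Γ c (w ++ [(s, e)]) ∧
    wordProd Γ c (w ++ [(s, e)]) = g

/-- The vertices of `Γ` with finite label. -/
def Vfin {V : Type*} (c : V → ℕ∞) := {s : V // c s ≠ ⊤}

/-- The vertices of `Γ` with infinite label. -/
def Vinf {V : Type*} (c : V → ℕ∞) := {s : V // c s = ⊤}

/-- Vertex set of the Davis–Januszkiewicz graph `Γ''`: `V_fin ∪ (V_inf × {0,1})`,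
where `true` encodes `1` and `false` encodes `0`. -/
def DJVert {V : Type*} (c : V → ℕ∞) := Vfin c ⊕ (Vinf c × Bool)

/-- The graph `Γ''`: the subgraph on `V_fin ∪ (V_inf × {1})` is a copy of `Γ`, and
each `(v,0)` is joined to every other vertex except `(v,1)`. -/
def DJGraph {V : Type*} (Γ : SimpleGraph V) (c : V → ℕ∞) : SimpleGraph (DJVert c) :=
  SimpleGraph.fromRel (fun x y =>
    match x, y with
    | Sum.inl s, Sum.inl t => Γ.Adj s.1 t.1
    | Sum.inl s, Sum.inr (t, b) => if b then Γ.Adj s.1 t.1 else True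
    | Sum.inr (t, b), Sum.inl s => if b then Γ.Adj s.1 t.1 else True
    | Sum.inr (s, a), Sum.inr (t, b) =>
        if a = true ∧ b = true then Γ.Adj s.1 t.1 else s.1 ≠ t.1)

/-- Labels of `Γ''`: vertices of `V_fin` keep their label, the new vertices are
labeled `2`. -/
def DJLabel {V : Type*} (c : V → ℕ∞) : DJVert c → ℕ∞
  | Sum.inl s => c s.1
  | Sum.inr _ => 2

/-- The graph product `G(Γ'')`. -/
abbrev GPdj {V : Type*} (Γ : SimpleGraph V) (c : V → ℕ∞) : Type _ :=
  GraphProduct (DJGraph Γ c) (DJLabel c)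

/-- The generator of `G(Γ'')` corresponding to `s ∈ V_fin`. -/
def genFin {V : Type*} (Γ : SimpleGraph V) (c : V → ℕ∞) (s : Vfin c) : GPdj Γ c :=
  gpGen (DJGraph Γ c) (DJLabel c) (Sum.inl s)

/-- The generator of `G(Γ'')` corresponding to `(s,1)`, `s ∈ V_inf`. -/
def genA {V : Type*} (Γ : SimpleGraph V) (c : V → ℕ∞) (s : Vinf c) : GPdj Γ c :=
  gpGen (DJGraph Γ c) (DJLabel c) (Sum.inr (s, true))

/-- The generator of `G(Γ'')` corresponding to `(s,0)`, `s ∈ V_inf`. -/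
def genR {V : Type*} (Γ : SimpleGraph V) (c : V → ℕ∞) (s : Vinf c) : GPdj Γ c :=
  gpGen (DJGraph Γ c) (DJLabel c) (Sum.inr (s, false))

/-- `φ` is the homomorphism `β`, determined by `β(s) = s` for `s ∈ V_fin` and
`β(s) = (s,1)·(s,0)` for `s ∈ V_inf`. -/
def BetaSpec {V : Type*} (Γ : SimpleGraph V) (c : V → ℕ∞)
    (φ : GraphProduct Γ c →* GPdj Γ c) : Prop :=
  (∀ (s : V) (h : c s ≠ ⊤), φ (gpGen Γ c s) = genFin Γ c ⟨s, h⟩) ∧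
  (∀ (s : V) (h : c s = ⊤), φ (gpGen Γ c s) = genA Γ c ⟨s, h⟩ * genR Γ c ⟨s, h⟩)

/-- The subgroup `E` of `G(Γ'')` generated by the elements `(s,0)`, `s ∈ V_inf`. -/
def Esub {V : Type*} (Γ : SimpleGraph V) (c : V → ℕ∞) : Subgroup (GPdj Γ c) :=
  Subgroup.closure (Set.range (genR Γ c))

lemma gp_pow_eq_one {V : Type*} (Γ : SimpleGraph V) (c : V → ℕ∞) (s : V) (n : ℕ)
    (h : c s = (n : ℕ∞)) : gpGen Γ c s ^ n = 1 := by
  have hr : (FreeGroup.of s ^ n : FreeGroup V) ∈ graphProductRels Γ c :=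
    Or.inl ⟨s, n, h, rfl⟩
  have : PresentedGroup.mk (graphProductRels Γ c) (FreeGroup.of s ^ n) = 1 := by
    apply (QuotientGroup.eq_one_iff _).mpr
    exact Subgroup.subset_normalClosure hr
  simpa [gpGen, PresentedGroup.of, map_pow] using this

lemma gp_commute {V : Type*} (Γ : SimpleGraph V) (c : V → ℕ∞) {s t : V}
    (h : Γ.Adj s t) : Commute (gpGen Γ c s) (gpGen Γ c t) := by
  have hr : (FreeGroup.of s * FreeGroup.of t * (FreeGroup.of s)⁻¹ * (FreeGroup.of t)⁻¹ :
      FreeGroup V) ∈ graphProductRels Γ c := Or.inr ⟨s, t, h, rfl⟩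
  have h1 : PresentedGroup.mk (graphProductRels Γ c)
      (FreeGroup.of s * FreeGroup.of t * (FreeGroup.of s)⁻¹ * (FreeGroup.of t)⁻¹) = 1 := by
    apply (QuotientGroup.eq_one_iff _).mpr
    exact Subgroup.subset_normalClosure hr
  have h2 : gpGen Γ c s * gpGen Γ c t * (gpGen Γ c s)⁻¹ * (gpGen Γ c t)⁻¹ = 1 := by
    simpa [gpGen, PresentedGroup.of] using h1
  exact commutatorElement_eq_one_iff_commute.mp (by rw [commutatorElement_def]; exact h2)


section DJ
variable {V : Type*} (Γ : SimpleGraph V) (c : V → ℕ∞)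

instance instDecEqVinf [DecidableEq V] : DecidableEq (Vinf c) :=
  inferInstanceAs (DecidableEq {s : V // c s = ⊤})

instance instFintypeVinf [Fintype V] [DecidableEq V] : Fintype (Vinf c) :=
  inferInstanceAs (Fintype {s : V // c s = ⊤})

lemma genR_sq (s : Vinf c) : genR Γ c s ^ 2 = 1 :=
  gp_pow_eq_one _ _ _ 2 rfl

lemma genA_sq (s : Vinf c) : genA Γ c s ^ 2 = 1 :=
  gp_pow_eq_one _ _ _ 2 rfl

lemma genR_inv (s : Vinf c) : (genR Γ c s)⁻¹ = genR Γ c s := by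
  have := genR_sq Γ c s
  rw [pow_two] at this
  exact inv_eq_of_mul_eq_one_left this

lemma genA_inv (s : Vinf c) : (genA Γ c s)⁻¹ = genA Γ c s := by
  have := genA_sq Γ c s
  rw [pow_two] at this
  exact inv_eq_of_mul_eq_one_left this

lemma adj_R_fin (s : Vinf c) (t : Vfin c) :
    (DJGraph Γ c).Adj (Sum.inr (s, false)) (Sum.inl t) := by
  refine (SimpleGraph.fromRel_adj ..).mpr ?_
  exact ⟨Sum.inr_ne_inl, Or.inl trivial⟩

lemma adj_R_A (s t : Vinf c) (h : s ≠ t) :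
    (DJGraph Γ c).Adj (Sum.inr (s, false)) (Sum.inr (t, true)) := by
  refine (SimpleGraph.fromRel_adj ..).mpr ?_
  refine ⟨fun hh => h (by injection hh with hh2; exact (Prod.ext_iff.mp hh2).1), Or.inl ?_⟩
  simp only [Bool.false_eq_true, false_and, if_false]
  exact fun hh => h (Subtype.ext hh)

lemma adj_R_R (s t : Vinf c) (h : s ≠ t) :
    (DJGraph Γ c).Adj (Sum.inr (s, false)) (Sum.inr (t, false)) := by
  refine (SimpleGraph.fromRel_adj ..).mpr ?_
  refine ⟨fun hh => h (by injection hh with hh2; exact (Prod.ext_iff.mp hh2).1), Or.inl ?_⟩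
  simp only [Bool.false_eq_true, false_and, if_false]
  exact fun hh => h (Subtype.ext hh)

lemma commute_R_fin (s : Vinf c) (t : Vfin c) :
    Commute (genR Γ c s) (genFin Γ c t) :=
  gp_commute _ _ (adj_R_fin Γ c s t)

lemma commute_R_A (s t : Vinf c) (h : s ≠ t) :
    Commute (genR Γ c s) (genA Γ c t) :=
  gp_commute _ _ (adj_R_A Γ c s t h)

lemma commute_R_R (s t : Vinf c) (h : s ≠ t) :
    Commute (genR Γ c s) (genR Γ c t) :=
  gp_commute _ _ (adj_R_R Γ c s t h)

end DJ

section Pi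
variable {V : Type*} [Fintype V] [DecidableEq V] (Γ : SimpleGraph V) (c : V → ℕ∞)

/-- target group -/
abbrev PGrp (c : V → ℕ∞) := Vinf c → Multiplicative (ZMod 2)

def djPiMap : DJVert c → PGrp c
  | Sum.inl _ => 1
  | Sum.inr (s, _) => Pi.mulSingle s (Multiplicative.ofAdd (1 : ZMod 2))

lemma djPiMap_rels : ∀ r ∈ graphProductRels (DJGraph Γ c) (DJLabel c),
    FreeGroup.lift (djPiMap c) r = 1 := by
  rintro r (⟨s, n, hn, rfl⟩ | ⟨s, t, _, rfl⟩)
  · rw [map_pow, FreeGroup.lift_apply_of]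
    match s with
    | Sum.inl u => simp [djPiMap]
    | Sum.inr (u, b) =>
      have h2 : n = 2 := by
        have h0 : (2 : ℕ∞) = (n : ℕ∞) := hn
        have : ((2 : ℕ) : ℕ∞) = (n : ℕ∞) := by exact_mod_cast h0
        exact_mod_cast this.symm
      subst h2
      funext v
      simp only [djPiMap, Pi.pow_apply, Pi.one_apply, Pi.mulSingle_apply]
      by_cases hv : v = u <;> simp [hv] <;> decide
  · simp only [map_mul, map_inv, FreeGroup.lift_apply_of]
    exact commutatorElement_eq_one_iff_commute.mpr (Commute.all (djPiMap c s) (djPiMap c t))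

noncomputable def piHom : GPdj Γ c →* PGrp c := PresentedGroup.toGroup (djPiMap_rels Γ c)

@[simp] lemma piHom_genFin (t : Vfin c) : piHom Γ c (genFin Γ c t) = 1 :=
  PresentedGroup.toGroup.of _

@[simp] lemma piHom_genA (s : Vinf c) :
    piHom Γ c (genA Γ c s) = Pi.mulSingle s (Multiplicative.ofAdd (1 : ZMod 2)) :=
  PresentedGroup.toGroup.of _

@[simp] lemma piHom_genR (s : Vinf c) :
    piHom Γ c (genR Γ c s) = Pi.mulSingle s (Multiplicative.ofAdd (1 : ZMod 2)) :=
  PresentedGroup.toGroup.of _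

end Pi

section Sigma

lemma pow_two_mod {G : Type*} [Group G] {g : G} (h : g ^ 2 = 1) (n : ℕ) :
    g ^ (n % 2) = g ^ n := by
  conv_rhs => rw [← Nat.div_add_mod n 2]
  rw [pow_add, pow_mul, h, one_pow, one_mul]

def pow2Hom {G : Type*} [Group G] (g : G) (h : g ^ 2 = 1) :
    Multiplicative (ZMod 2) →* G where
  toFun x := g ^ (Multiplicative.toAdd x).val
  map_one' := by simp
  map_mul' x y := by
    show g ^ (Multiplicative.toAdd (x * y)).val = _
    rw [toAdd_mul, ZMod.val_add, pow_two_mod h, pow_add]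

lemma pow2Hom_apply {G : Type*} [Group G] (g : G) (h : g ^ 2 = 1)
    (x : Multiplicative (ZMod 2)) :
    pow2Hom g h x = g ^ (Multiplicative.toAdd x).val := rfl

lemma pow2Hom_ofAdd_one {G : Type*} [Group G] (g : G) (h : g ^ 2 = 1) :
    pow2Hom g h (Multiplicative.ofAdd (1 : ZMod 2)) = g := by
  rw [pow2Hom_apply]
  norm_num [ZMod.val_one]

lemma ofAdd_one_pow_val (x : Multiplicative (ZMod 2)) :
    (Multiplicative.ofAdd (1 : ZMod 2)) ^ (Multiplicative.toAdd x).val = x := by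
  have h1 : (((Multiplicative.toAdd x).val : ℕ) : ZMod 2) = Multiplicative.toAdd x :=
    ZMod.natCast_rightInverse _
  have h2 : (Multiplicative.ofAdd (1 : ZMod 2)) ^ (Multiplicative.toAdd x).val
      = Multiplicative.ofAdd (((Multiplicative.toAdd x).val : ℕ) • (1 : ZMod 2)) := by
    rw [ofAdd_nsmul]
  rw [h2, nsmul_eq_mul, mul_one, h1]
  rfl

variable {V : Type*} [Fintype V] [DecidableEq V] (Γ : SimpleGraph V) (c : V → ℕ∞)

noncomputable def sigmaHom : PGrp c →* GPdj Γ c :=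
  MonoidHom.noncommPiCoprod (fun s => pow2Hom (genR Γ c s) (genR_sq Γ c s))
    (fun s t hst x y => ((commute_R_R Γ c s t hst).pow_pow _ _))

@[simp] lemma sigmaHom_mulSingle (s : Vinf c) (x : Multiplicative (ZMod 2)) :
    sigmaHom Γ c (Pi.mulSingle s x) = genR Γ c s ^ (Multiplicative.toAdd x).val :=
  MonoidHom.noncommPiCoprod_mulSingle _ _ _

lemma piHom_comp_sigmaHom :
    (piHom Γ c).comp (sigmaHom Γ c) = MonoidHom.id (PGrp c) := by
  refine MonoidHom.functions_ext _ _ _ fun s x => ?_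
  simp only [MonoidHom.comp_apply, MonoidHom.id_apply, sigmaHom_mulSingle, map_pow,
    piHom_genR]
  rw [← Pi.mulSingle_pow, ofAdd_one_pow_val]

lemma sigmaHom_mem_Esub (x : PGrp c) : sigmaHom Γ c x ∈ Esub Γ c := by
  have comm : ((Finset.univ : Finset (Vinf c)) : Set (Vinf c)).Pairwise
      (Function.onFun Commute fun i => pow2Hom (genR Γ c i) (genR_sq Γ c i) (x i)) :=
    fun i _ j _ h => ((commute_R_R Γ c i j h).pow_pow _ _)
  exact Subgroup.noncommProd_mem _ comm
    (fun i _ => pow_mem (Subgroup.subset_closure (Set.mem_range_self i)) _)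

end Sigma

section Iso
variable {V : Type*} [Fintype V] [DecidableEq V] (Γ : SimpleGraph V) (c : V → ℕ∞)

lemma piHom_sigmaHom (z : PGrp c) : piHom Γ c (sigmaHom Γ c z) = z := by
  have := DFunLike.congr_fun (piHom_comp_sigmaHom Γ c) z
  simpa using this

lemma sigmaHom_mulSingle_one (s : Vinf c) :
    sigmaHom Γ c (Pi.mulSingle s (Multiplicative.ofAdd (1 : ZMod 2))) = genR Γ c s := by
  rw [sigmaHom_mulSingle]
  norm_num [ZMod.val_one]

noncomputable def sigmaRestrict : PGrp c →* Esub Γ c :=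
  (sigmaHom Γ c).codRestrict _ (sigmaHom_mem_Esub Γ c)

lemma sigmaRestrict_bijective : Function.Bijective (sigmaRestrict Γ c) := by
  constructor
  · intro x y hxy
    have h1 : sigmaHom Γ c x = sigmaHom Γ c y := congrArg Subtype.val hxy
    rw [← piHom_sigmaHom Γ c x, ← piHom_sigmaHom Γ c y, h1]
  · intro y
    have hle : Esub Γ c ≤ (sigmaHom Γ c).range := by
      refine (Subgroup.closure_le _).mpr ?_
      rintro _ ⟨s, rfl⟩
      exact ⟨Pi.mulSingle s (Multiplicative.ofAdd (1 : ZMod 2)),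
        sigmaHom_mulSingle_one Γ c s⟩
    obtain ⟨x, hx⟩ := hle y.2
    exact ⟨x, Subtype.ext hx⟩

noncomputable def esubEquiv : Esub Γ c ≃* PGrp c :=
  (MulEquiv.ofBijective _ (sigmaRestrict_bijective Γ c)).symm

lemma finite_Esub : Finite (Esub Γ c) :=
  Finite.of_equiv _ (esubEquiv Γ c).symm.toEquiv

lemma card_Esub : Nat.card (Esub Γ c) = 2 ^ Nat.card (Vinf c) := by
  rw [Nat.card_congr (esubEquiv Γ c).toEquiv, Nat.card_fun]
  congr 1
  simp [Nat.card_eq_fintype_card]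

end Iso

section Index
variable {V : Type*} [Fintype V] [DecidableEq V] (Γ : SimpleGraph V) (c : V → ℕ∞)
variable (φ : GraphProduct Γ c →* GPdj Γ c)

lemma genRsq' (s : Vinf c) : genR Γ c s * genR Γ c s = 1 := by
  rw [← sq]; exact genR_sq Γ c s

lemma conj_genR_mem (hφ : BetaSpec Γ c φ) (s : Vinf c) (x : GPdj Γ c)
    (hx : x ∈ φ.range) :
    genR Γ c s * x * (genR Γ c s)⁻¹ ∈ φ.range := by
  obtain ⟨g, rfl⟩ := hx
  have key : ∀ y, ((MulAut.conj (genR Γ c s)).toMonoidHom.comp φ) y ∈ φ.range := by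
    intro y
    refine PresentedGroup.generated_by _ (φ.range.comap _) (fun v => ?_) y
    show genR Γ c s * φ (gpGen Γ c v) * (genR Γ c s)⁻¹ ∈ φ.range
    by_cases hv : c v = ⊤
    · rw [hφ.2 v hv]
      by_cases hsv : (⟨v, hv⟩ : Vinf c) = s
      · rw [hsv]
        have he : genR Γ c s * (genA Γ c s * genR Γ c s) * (genR Γ c s)⁻¹
            = (genA Γ c s * genR Γ c s)⁻¹ := by
          rw [mul_inv_rev, genR_inv, genA_inv, mul_assoc (genR Γ c s), mul_assoc,
            genRsq' Γ c s, mul_one]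
        rw [he]
        exact inv_mem ⟨PresentedGroup.of v,
          by show φ (gpGen Γ c v) = _; rw [hφ.2 v hv, hsv]⟩
      · have hc : Commute (genR Γ c s) (genA Γ c ⟨v, hv⟩ * genR Γ c ⟨v, hv⟩) :=
          (commute_R_A Γ c s ⟨v, hv⟩ (fun h => hsv h.symm)).mul_right
            (commute_R_R Γ c s ⟨v, hv⟩ (fun h => hsv h.symm))
        rw [hc.eq, mul_inv_cancel_right]
        exact ⟨gpGen Γ c v, hφ.2 v hv⟩
    · rw [hφ.1 v hv]
      have hc := commute_R_fin Γ c s ⟨v, hv⟩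
      rw [hc.eq, mul_inv_cancel_right]
      exact ⟨gpGen Γ c v, hφ.1 v hv⟩
  exact key g

lemma genR_mem_normalizer (hφ : BetaSpec Γ c φ) (s : Vinf c) :
    genR Γ c s ∈ Subgroup.normalizer (φ.range : Set (GPdj Γ c)) := by
  rw [Subgroup.mem_normalizer_iff]
  intro h
  have cancel : ∀ x : GPdj Γ c,
      genR Γ c s * (genR Γ c s * x * (genR Γ c s)⁻¹) * (genR Γ c s)⁻¹ = x := by
    intro x
    simp only [genR_inv, ← mul_assoc]
    rw [genRsq' Γ c s, one_mul, mul_assoc, genRsq' Γ c s, mul_one]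
  constructor
  · exact conj_genR_mem Γ c φ hφ s h
  · intro hh
    have := conj_genR_mem Γ c φ hφ s _ hh
    rwa [cancel] at this

lemma esub_le_normalizer (hφ : BetaSpec Γ c φ) : Esub Γ c ≤ Subgroup.normalizer (φ.range : Set (GPdj Γ c)) :=
  (Subgroup.closure_le _).mpr (by
    rintro _ ⟨s, rfl⟩; exact genR_mem_normalizer Γ c φ hφ s)

lemma range_sup_esub (hφ : BetaSpec Γ c φ) : φ.range ⊔ Esub Γ c = ⊤ := by
  rw [eq_top_iff]
  intro x _
  refine PresentedGroup.generated_by _ _ (fun j => ?_) x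
  match j with
  | Sum.inl t => exact Subgroup.mem_sup_left ⟨gpGen Γ c t.1, hφ.1 t.1 t.2⟩
  | Sum.inr (s, false) =>
      exact Subgroup.mem_sup_right (Subgroup.subset_closure (Set.mem_range_self s))
  | Sum.inr (s, true) =>
      have hA : genA Γ c s ∈ φ.range ⊔ Esub Γ c := by
        have hAR : genA Γ c s * genR Γ c s ∈ φ.range ⊔ Esub Γ c :=
          Subgroup.mem_sup_left ⟨gpGen Γ c s.1, hφ.2 s.1 s.2⟩
        have hR : genR Γ c s ∈ φ.range ⊔ Esub Γ c :=
          Subgroup.mem_sup_right (Subgroup.subset_closure (Set.mem_range_self s))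
        have h2 := mul_mem hAR (inv_mem hR)
        rwa [mul_inv_cancel_right] at h2
      exact hA

lemma range_normal (hφ : BetaSpec Γ c φ) : φ.range.Normal := by
  apply Subgroup.normalizer_eq_top_iff.mp
  rw [eq_top_iff, ← range_sup_esub Γ c φ hφ]
  exact sup_le Subgroup.le_normalizer (esub_le_normalizer Γ c φ hφ)

lemma range_index (hφ : BetaSpec Γ c φ) :
    φ.range.index = 2 ^ Nat.card (Vinf c) := by
  haveI hN : φ.range.Normal := range_normal Γ c φ hφ
  haveI := finite_Esub Γ c
  have hsurj : Function.Surjective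
      (fun e : Esub Γ c => (QuotientGroup.mk (e : GPdj Γ c) : GPdj Γ c ⧸ φ.range)) := by
    intro q
    obtain ⟨x, rfl⟩ := QuotientGroup.mk_surjective q
    have hx : x ∈ (↑(φ.range ⊔ Esub Γ c) : Set (GPdj Γ c)) := by
      rw [range_sup_esub Γ c φ hφ]; trivial
    rw [Subgroup.normal_mul] at hx
    obtain ⟨n, hn, e, he, rfl⟩ := hx
    refine ⟨⟨e, he⟩, ?_⟩
    show QuotientGroup.mk e = QuotientGroup.mk (n * e)
    rw [QuotientGroup.mk_mul, (QuotientGroup.eq_one_iff n).mpr hn, one_mul]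
  have h1 : φ.range.index ≤ 2 ^ Nat.card (Vinf c) := by
    calc φ.range.index = Nat.card (GPdj Γ c ⧸ φ.range) := rfl
      _ ≤ Nat.card (Esub Γ c) := Nat.card_le_card_of_surjective _ hsurj
      _ = 2 ^ Nat.card (Vinf c) := card_Esub Γ c
  have h0 : φ.range.index ≠ 0 := by
    haveI : Finite (GPdj Γ c ⧸ φ.range) := Finite.of_surjective _ hsurj
    exact Nat.card_ne_zero.mpr ⟨inferInstance, inferInstance⟩
  have hdvd : 2 ^ Nat.card (Vinf c) ∣ φ.range.index := by
    have hle : φ.range ≤ (piHom Γ c).ker := by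
      have hc : (piHom Γ c).comp φ = 1 := by
        refine PresentedGroup.ext fun v => ?_
        show piHom Γ c (φ (gpGen Γ c v)) = 1
        by_cases hv : c v = ⊤
        · rw [hφ.2 v hv, map_mul]
          erw [piHom_genA, ← Pi.mulSingle_mul]
          have : (Multiplicative.ofAdd (1 : ZMod 2)) *
              (Multiplicative.ofAdd (1 : ZMod 2)) = 1 := by decide
          erw [this, Pi.mulSingle_one]
        · rw [hφ.1 v hv]
          erw [piHom_genFin]
      rintro _ ⟨g, rfl⟩
      rw [MonoidHom.mem_ker]
      simpa using DFunLike.congr_fun hc g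
    have hdvd' := Subgroup.index_dvd_of_le hle
    have hker : (piHom Γ c).ker.index = 2 ^ Nat.card (Vinf c) := by
      rw [Subgroup.index_ker]
      have hsur : Function.Surjective (piHom Γ c) :=
        fun y => ⟨sigmaHom Γ c y, piHom_sigmaHom Γ c y⟩
      rw [MonoidHom.range_eq_top.mpr hsur]
      rw [Nat.card_congr Subgroup.topEquiv.toEquiv, Nat.card_fun]
      congr 1
      simp [Nat.card_eq_fintype_card]
    rw [← hker]; exact hdvd'
  exact le_antisymm h1 (Nat.le_of_dvd (Nat.pos_of_ne_zero h0) hdvd)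

end Index

/-- the subgroup `E` generated by the `(s,0)`, `s ∈ V_inf`, is finite,
isomorphic to `(ℤ/2ℤ)^{V_inf}`; consequently the image of `β` has index
`2^{#V_inf}` in `G(Γ'')`. -/
theorem Esub_finite_and_index {V : Type*} [Fintype V] [DecidableEq V]
    (Γ : SimpleGraph V) (c : V → ℕ∞) :
    Finite (Esub Γ c) ∧
    Nonempty (Esub Γ c ≃* (Vinf c → Multiplicative (ZMod 2))) ∧
    (∀ φ : GraphProduct Γ c →* GPdj Γ c, BetaSpec Γ c φ →
      φ.range.index = 2 ^ Nat.card (Vinf c)) := by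
  exact ⟨finite_Esub Γ c, ⟨esubEquiv Γ c⟩, fun φ hφ => range_index Γ c φ hφ⟩
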